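/- In the MV register, the state after receiving a set S of updates equals the set of maximal elements of S, for any order and multiplicity of delivery: folding insert over any list whose element set is S, starting from the empty antichain, yields the maximal elements of S. -/

import Mathlib

open Classical in
/-- MV-register insertion: applying an update `u` to a state `T'` yields the
set of maximal elements of `T' ∪ {u}`. -/
noncomputable def mvInsert {α : Type} [PartialOrder α] [DecidableEq α]
    (T' : Finset α) (u : α) : Finset α :=
  (insert u T').filter (fun x => ∀ y ∈ insert u T', ¬ x < y)

open Classical in
/-- Maximal elements of a finset. -/
noncomputable def mvMax {α : Type} [PartialOrder α] (A : Finset α) : Finset α :=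
  A.filter (fun x => ∀ y ∈ A, ¬ x < y)

/-- Every element of a finset is below some maximal element. -/
theorem mvMax_above {α : Type} [PartialOrder α] [DecidableEq α]
    (A : Finset α) {y : α} (hy : y ∈ A) : ∃ z ∈ mvMax A, y ≤ z := by
  classical
  obtain ⟨m, hm, hmax⟩ := (A.filter (fun y' => y ≤ y')).exists_maximal
    ⟨y, by simp [hy]⟩
  simp only [Finset.mem_filter] at hm
  refine ⟨m, ?_, hm.2⟩
  simp only [mvMax, Finset.mem_filter]
  refine ⟨hm.1, fun w hw hlt => lt_irrefl m (hlt.trans_le (hmax ?_ hlt.le))⟩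
  exact Finset.mem_filter.2 ⟨hw, hm.2.trans hlt.le⟩

theorem mvInsert_max {α : Type} [PartialOrder α] [DecidableEq α]
    (A : Finset α) (u : α) : mvInsert (mvMax A) u = mvMax (insert u A) := by
  classical
  ext x
  simp only [mvInsert, mvMax, Finset.mem_filter, Finset.mem_insert]
  constructor
  · rintro ⟨hx, hmax⟩
    refine ⟨?_, ?_⟩
    · tauto
    · rintro y (rfl | hy) hlt
      · exact hmax y (Or.inl rfl) hlt
      · obtain ⟨z, hz, hyz⟩ := mvMax_above A hy
        simp only [mvMax, Finset.mem_filter] at hz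
        exact hmax z (Or.inr hz) (hlt.trans_le hyz)
  · rintro ⟨hx, hmax⟩
    refine ⟨?_, ?_⟩
    · rcases hx with rfl | hx
      · exact Or.inl rfl
      · exact Or.inr ⟨hx, fun y hy => hmax y (Or.inr hy)⟩
    · rintro y (rfl | hy)
      · exact hmax y (Or.inl rfl)
      · exact hmax y (Or.inr hy.1)

theorem mv_fold_aux {α : Type} [PartialOrder α] [DecidableEq α]
    (l : List α) (A : Finset α) :
    l.foldl mvInsert (mvMax A) = mvMax (A ∪ l.toFinset) := by
  induction l generalizing A with
  | nil => simp [List.foldl]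
  | cons a t ih =>
    simp only [List.foldl, mvInsert_max, ih (insert a A), List.toFinset_cons]
    have h : insert a A ∪ t.toFinset = A ∪ insert a t.toFinset := by
      ext x; simp
    rw [h]

open Classical in
/-- In the MV register, the state after receiving a set `S` of updates equals
the set of maximal elements of `S`, for any order and multiplicity of
delivery: folding `mvInsert` over any list whose element set is `S`, starting
from the empty antichain, yields the maximal elements of `S`. -/
theorem mv_fold_is_maximal_elements
    {α : Type} [PartialOrder α] [DecidableEq α]
    (S : Finset α) (l : List α)
    (hset : ∀ u, u ∈ l ↔ u ∈ S) :
    l.foldl mvInsert ∅ = S.filter (fun x => ∀ y ∈ S, ¬ x < y) := by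
  classical
  have h0 : (∅ : Finset α) = mvMax (∅ : Finset α) := by simp [mvMax]
  have hS : (∅ : Finset α) ∪ l.toFinset = S := by
    ext x; simp [hset]
  rw [h0, mv_fold_aux, hS]
  simp [mvMax]
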